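/- Define q_k = (1/2)∫_0^1 c^{k-1}√(1−c)·e^{c/2+c²/4} dc (Janson's limiting length distribution for the min max-weight cycle in the undirected graph). Then q_k = (1+o(1)) · (e^{3/4}√π/4) · k^{−3/2} as k → ∞, and Σ_{k≥3} q_k = 1. -/

import Mathlib

open Real Filter

/-- Janson's limiting length distribution for the min max-weight cycle in the
undirected complete graph. -/
noncomputable def qLen (k : ℕ) : ℝ :=
  (1 / 2) * ∫ c in (0 : ℝ)..1,
    c ^ (k - 1) * Real.sqrt (1 - c) * Real.exp (c / 2 + c ^ 2 / 4)

open intervalIntegral MeasureTheory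

noncomputable def B32 (m : ℕ) : ℝ := ∫ c in (0:ℝ)..1, c ^ m * Real.sqrt (1 - c)

lemma gamma_half (n : ℕ) : Real.Gamma (n + 1/2) =
    (Nat.factorial (2*n)) * Real.sqrt π / (4^n * Nat.factorial n) := by
  induction n with
  | zero => norm_num [Real.Gamma_one_half_eq]
  | succ n ih =>
    have h : ((n:ℝ)+1) + 1/2 = ((n:ℝ) + 1/2) + 1 := by ring
    have hne : (n:ℝ) + 1/2 ≠ 0 := by positivity
    push_cast
    rw [h, Real.Gamma_add_one hne, ih]
    have h2 : (2*(n+1)) = (2*n)+1+1 := by ring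
    rw [h2]
    push_cast [Nat.factorial_succ]
    have hfn : (0:ℝ) < Nat.factorial n := by positivity
    field_simp
    ring

lemma b32_complex (m : ℕ) : (B32 m : ℂ) = Complex.betaIntegral (m+1) (3/2) := by
  rw [Complex.betaIntegral, B32, ← intervalIntegral.integral_ofReal]
  refine intervalIntegral.integral_congr fun x hx => ?_
  rw [Set.uIcc_of_le (by norm_num : (0:ℝ) ≤ 1)] at hx
  push_cast
  rw [add_sub_cancel_right]
  have h1 : ((x:ℂ)) ^ (m:ℂ) = ((x:ℝ)^m : ℝ) := by
    rw [Complex.cpow_natCast]; push_cast; ring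
  have h2 : ((1:ℂ) - x) ^ ((3:ℂ)/2 - 1) = ((Real.sqrt (1-x) : ℝ) : ℂ) := by
    have hx1 : (0:ℝ) ≤ 1 - x := by linarith [hx.2]
    have : ((3:ℂ)/2 - 1) = ((1/2 : ℝ) : ℂ) := by norm_num
    rw [this, show ((1:ℂ) - x) = (((1 - x : ℝ)):ℂ) by push_cast; ring,
      ← Complex.ofReal_cpow hx1]
    norm_num [Real.sqrt_eq_rpow]
  rw [h1, h2]; push_cast; ring

lemma b32_closed (m : ℕ) : B32 m =
    (Nat.factorial m) * (Nat.factorial (m+1)) * 4^(m+1) / (Nat.factorial (2*m+3)) := by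
  have hs : (0:ℝ) < (m:ℝ) + 1 := by positivity
  have key := Complex.Gamma_mul_Gamma_eq_betaIntegral
    (s := ((m:ℝ)+1 : ℝ)) (t := ((3:ℝ)/2 : ℝ)) (by simpa using hs) (by norm_num)
  -- identify betaIntegral with B32
  have hb : Complex.betaIntegral ((((m:ℝ)+1 : ℝ)):ℂ) ((((3:ℝ)/2 : ℝ)):ℂ) = (B32 m : ℂ) := by
    rw [b32_complex]; push_cast; norm_num
  rw [hb] at key
  have hsum : ((((m:ℝ)+1 : ℝ)):ℂ) + (((3:ℝ)/2 : ℝ):ℂ) = ((((m:ℝ) + 5/2 : ℝ)):ℂ) := by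
    push_cast; ring
  rw [hsum, Complex.Gamma_ofReal, Complex.Gamma_ofReal, Complex.Gamma_ofReal,
    ← Complex.ofReal_mul] at key
  have hne : Real.Gamma ((m:ℝ) + 5/2) ≠ 0 := by
    apply Real.Gamma_ne_zero
    intro n
    have : (0:ℝ) < (m:ℝ) + 5/2 := by positivity
    intro h; rw [h] at this; simp at this
    have : (0:ℝ) ≤ (n:ℝ) := Nat.cast_nonneg n
    linarith
  have key2 : Real.Gamma ((m:ℝ)+1) * Real.Gamma (3/2) = Real.Gamma ((m:ℝ)+5/2) * B32 m := by
    exact_mod_cast key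
  have hB : B32 m = Real.Gamma ((m:ℝ)+1) * Real.Gamma (3/2) / Real.Gamma ((m:ℝ)+5/2) := by
    rw [eq_div_iff hne, key2]; ring
  rw [hB, Real.Gamma_nat_eq_factorial]
  have h32 : Real.Gamma (3/2) = Real.Gamma ((1:ℕ) + 1/2) := by norm_num
  have h52 : Real.Gamma ((m:ℝ) + 5/2) = Real.Gamma (((m+2:ℕ):ℝ) + 1/2) := by push_cast; ring_nf
  rw [h32, h52, gamma_half, gamma_half]
  have hπ : Real.sqrt π ≠ 0 := by positivity
  have hf1 : (0:ℝ) < Nat.factorial (2*(m+2)) := by positivity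
  have hf2 : (0:ℝ) < Nat.factorial (m+2) := by positivity
  have hf3 : (0:ℝ) < Nat.factorial (2*m+3) := by positivity
  have hexp : 2*(m+2) = (2*m+3)+1 := by ring
  have hexp2 : Nat.factorial (2*(m+2)) = (2*(m+2)) * Nat.factorial (2*m+3) := by
    rw [hexp, Nat.factorial_succ]
  have hexp3 : Nat.factorial (m+2) = (m+2) * Nat.factorial (m+1) := Nat.factorial_succ _
  rw [hexp2, hexp3]
  push_cast
  have hf4 : (0:ℝ) < Nat.factorial (m+1) := by positivity
  field_simp
  ring

lemma b32_pos (m : ℕ) : 0 < B32 m := by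
  rw [b32_closed]; positivity

lemma sqrt4 (x : ℝ) (hx : 0 ≤ x) : Real.sqrt (4 * x) = 2 * Real.sqrt x := by
  rw [show (4:ℝ) = 2^2 by norm_num, Real.sqrt_mul (by positivity), Real.sqrt_sq (by norm_num)]

lemma b32_stirling (n : ℕ) :
    ((n:ℝ)+1)^((3:ℝ)/2) * B32 n =
      Stirling.stirlingSeq (n+1)^2 / Stirling.stirlingSeq (2*(n+1)) * (((n:ℝ)+1)/(2*(n:ℝ)+3)) := by
  have hE : (0:ℝ) < Real.exp 1 := Real.exp_pos 1
  have ha : (0:ℝ) < (n:ℝ)+1 := by positivity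
  have hs : (0:ℝ) < Real.sqrt ((n:ℝ)+1) := Real.sqrt_pos.mpr ha
  have hrw : ((n:ℝ)+1)^((3:ℝ)/2) = ((n:ℝ)+1) * Real.sqrt ((n:ℝ)+1) := by
    rw [show (3:ℝ)/2 = 1 + 1/2 by norm_num, Real.rpow_add ha, Real.rpow_one,
      Real.sqrt_eq_rpow]
  have hfact : ((2*n+3).factorial : ℝ) = (2*(n:ℝ)+3) * ((2*n+2).factorial : ℝ) := by
    rw [show 2*n+3 = (2*n+2)+1 by ring, Nat.factorial_succ]; push_cast; ring
  have hfact2 : ((n+1).factorial : ℝ) = ((n:ℝ)+1) * (n.factorial : ℝ) := by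
    rw [Nat.factorial_succ]; push_cast; ring
  have hidx : 2*(n+1) = 2*n+2 := by ring
  rw [b32_closed, Stirling.stirlingSeq, Stirling.stirlingSeq, hidx, hfact, hfact2]
  push_cast
  have h1 : Real.sqrt (2*(2*(n:ℝ)+2)) = 2 * Real.sqrt ((n:ℝ)+1) := by
    rw [show 2*(2*(n:ℝ)+2) = 4 * ((n:ℝ)+1) by ring, sqrt4 _ ha.le]
  have h2 : Real.sqrt (2*((n:ℝ)+1)) ^ 2 = 2*((n:ℝ)+1) := Real.sq_sqrt (by positivity)
  have hp1 : ((((n:ℝ)+1)/Real.exp 1) ^ (n+1))^2 = (((n:ℝ)+1)/Real.exp 1)^(2*n+2) := by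
    rw [← pow_mul]; congr 1; ring
  have hp2 : ((2*(n:ℝ)+2)/Real.exp 1) ^ (2*n+2)
      = 2^(2*n+2) * ((((n:ℝ)+1)/Real.exp 1))^(2*n+2) := by
    rw [show (2*(n:ℝ)+2)/Real.exp 1 = 2*(((n:ℝ)+1)/Real.exp 1) by ring, mul_pow]
  have hp3 : (4:ℝ)^(n+1) = 2^(2*n+2) := by
    rw [show (4:ℝ)=2^2 by norm_num, ← pow_mul, show 2*(n+1)=2*n+2 from by ring]
  have hx : (((n:ℝ)+1)/Real.exp 1) ≠ 0 := by positivity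
  have hfn : ((n.factorial:ℝ)) ≠ 0 := by positivity
  have hf22 : (((2*n+2).factorial:ℝ)) ≠ 0 := by positivity
  have h23 : (2*(n:ℝ)+3) ≠ 0 := by positivity
  have hden : (Real.sqrt (2*((n:ℝ)+1)) * ((((n:ℝ)+1)/Real.exp 1))^(n+1))^2
      = (2*((n:ℝ)+1)) * ((((n:ℝ)+1)/Real.exp 1))^(2*n+2) := by
    rw [mul_pow, h2, hp1]
  rw [hrw, h1, div_pow, hden, hp2, hp3]
  field_simp

lemma tendsto_B32 :
    Tendsto (fun n : ℕ => ((n:ℝ)+1)^((3:ℝ)/2) * B32 n) atTop (nhds (Real.sqrt π / 2)) := by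
  have hπ : Real.sqrt π ≠ 0 := by positivity
  have s1 : Tendsto (fun n : ℕ => Stirling.stirlingSeq (n+1)) atTop (nhds (Real.sqrt π)) :=
    Stirling.tendsto_stirlingSeq_sqrt_pi.comp (tendsto_add_atTop_nat 1)
  have s2 : Tendsto (fun n : ℕ => Stirling.stirlingSeq (2*(n+1))) atTop (nhds (Real.sqrt π)) := by
    refine Stirling.tendsto_stirlingSeq_sqrt_pi.comp ?_
    exact tendsto_atTop_mono (fun n => by omega) (tendsto_add_atTop_nat 1)
  have s3 : Tendsto (fun n : ℕ => ((n:ℝ)+1)/(2*(n:ℝ)+3)) atTop (nhds (1/2)) := by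
    have h : ∀ n : ℕ, ((n:ℝ)+1)/(2*(n:ℝ)+3) = (2 + 1/((n:ℝ)+1))⁻¹ := by
      intro n
      have hn : (0:ℝ) < (n:ℝ)+1 := by positivity
      rw [inv_eq_one_div]
      rw [div_eq_div_iff (by positivity) (by positivity)]
      field_simp
      ring
    simp only [h]
    have := (tendsto_const_nhds (x := (2:ℝ)) (f := atTop (α := ℕ))).add
      tendsto_one_div_add_atTop_nhds_zero_nat
    have h2 := this.inv₀ (by norm_num : (2:ℝ) + 0 ≠ 0)
    norm_num at h2 ⊢
    exact h2
  have main := ((s1.pow 2).div s2 hπ).mul s3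
  have hval : (Real.sqrt π)^2 / Real.sqrt π * (1/2) = Real.sqrt π / 2 := by
    field_simp [sq]
  rw [hval] at main
  refine main.congr fun n => ?_
  simp only [Pi.div_apply]
  rw [b32_stirling n]

noncomputable def gfun (c : ℝ) : ℝ := Real.exp (c/2 + c^2/4)

noncomputable def Jm (m : ℕ) : ℝ := ∫ c in (0:ℝ)..1, c ^ m * Real.sqrt (1 - c) * gfun c

lemma gfun_cont : Continuous gfun := by
  unfold gfun; continuity

lemma gfun_pos (c : ℝ) : 0 < gfun c := Real.exp_pos _

lemma gfun_mono {a c : ℝ} (ha : 0 ≤ a) (h : a ≤ c) : gfun a ≤ gfun c := by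
  unfold gfun
  apply Real.exp_le_exp.mpr
  have : a^2 ≤ c^2 := by nlinarith
  linarith

lemma intInt_base (m : ℕ) : IntervalIntegrable (fun c : ℝ => c ^ m * Real.sqrt (1-c))
    MeasureTheory.volume 0 1 := by
  apply Continuous.intervalIntegrable
  continuity

lemma intInt_J (m : ℕ) : IntervalIntegrable (fun c : ℝ => c ^ m * Real.sqrt (1-c) * gfun c)
    MeasureTheory.volume 0 1 := by
  apply Continuous.intervalIntegrable
  exact (by continuity : Continuous fun c : ℝ => c ^ m * Real.sqrt (1-c))|>.mul gfun_cont

lemma Jm_upper (m : ℕ) : Jm m ≤ Real.exp (3/4) * B32 m := by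
  have h : Jm m ≤ ∫ c in (0:ℝ)..1, Real.exp (3/4) * (c ^ m * Real.sqrt (1-c)) := by
    apply intervalIntegral.integral_mono_on (by norm_num) (intInt_J m)
      ((intInt_base m).const_mul _)
    intro x hx
    have h1 : gfun x ≤ Real.exp (3/4) := by
      calc gfun x ≤ gfun 1 := gfun_mono hx.1 hx.2
        _ = Real.exp (3/4) := by norm_num [gfun]
    have h2 : 0 ≤ x ^ m * Real.sqrt (1-x) :=
      mul_nonneg (pow_nonneg hx.1 m) (Real.sqrt_nonneg _)
    calc x ^ m * Real.sqrt (1-x) * gfun x ≤ x ^ m * Real.sqrt (1-x) * Real.exp (3/4) :=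
          mul_le_mul_of_nonneg_left h1 h2
      _ = Real.exp (3/4) * (x ^ m * Real.sqrt (1-x)) := by ring
  rwa [intervalIntegral.integral_const_mul] at h

lemma Jm_lower (m : ℕ) {a : ℝ} (ha : 0 ≤ a) (ha1 : a ≤ 1) :
    gfun a * (B32 m - a ^ m) ≤ Jm m := by
  have hsub1 : Set.uIcc (0:ℝ) a ⊆ Set.uIcc (0:ℝ) 1 := by
    rw [Set.uIcc_of_le ha, Set.uIcc_of_le (by norm_num : (0:ℝ) ≤ 1)]
    exact Set.Icc_subset_Icc le_rfl ha1
  have hsub2 : Set.uIcc a (1:ℝ) ⊆ Set.uIcc (0:ℝ) 1 := by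
    rw [Set.uIcc_of_le ha1, Set.uIcc_of_le (by norm_num : (0:ℝ) ≤ 1)]
    exact Set.Icc_subset_Icc ha le_rfl
  have hJ1 := (intInt_J m).mono_set hsub1
  have hJ2 := (intInt_J m).mono_set hsub2
  have hB1 := (intInt_base m).mono_set hsub1
  have hB2 := (intInt_base m).mono_set hsub2
  have hsplitJ : Jm m = (∫ c in (0:ℝ)..a, c ^ m * Real.sqrt (1-c) * gfun c)
      + ∫ c in a..(1:ℝ), c ^ m * Real.sqrt (1-c) * gfun c :=
    (intervalIntegral.integral_add_adjacent_intervals hJ1 hJ2).symm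
  have hsplitB : B32 m = (∫ c in (0:ℝ)..a, c ^ m * Real.sqrt (1-c))
      + ∫ c in a..(1:ℝ), c ^ m * Real.sqrt (1-c) :=
    (intervalIntegral.integral_add_adjacent_intervals hB1 hB2).symm
  have key1 : 0 ≤ ∫ c in (0:ℝ)..a, c ^ m * Real.sqrt (1-c) * gfun c := by
    apply intervalIntegral.integral_nonneg ha
    intro x hx
    exact mul_nonneg (mul_nonneg (pow_nonneg hx.1 m) (Real.sqrt_nonneg _)) (gfun_pos _).le
  have key2 : gfun a * ∫ c in a..(1:ℝ), c ^ m * Real.sqrt (1-c)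
      ≤ ∫ c in a..(1:ℝ), c ^ m * Real.sqrt (1-c) * gfun c := by
    rw [← intervalIntegral.integral_const_mul]
    apply intervalIntegral.integral_mono_on ha1 (hB2.const_mul _) hJ2
    intro x hx
    have h0x : 0 ≤ x := ha.trans hx.1
    have h2 : 0 ≤ x ^ m * Real.sqrt (1-x) :=
      mul_nonneg (pow_nonneg h0x m) (Real.sqrt_nonneg _)
    calc gfun a * (x ^ m * Real.sqrt (1-x)) ≤ gfun x * (x ^ m * Real.sqrt (1-x)) :=
          mul_le_mul_of_nonneg_right (gfun_mono ha hx.1) h2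
      _ = x ^ m * Real.sqrt (1-x) * gfun x := by ring
  have key3 : ∫ c in (0:ℝ)..a, c ^ m * Real.sqrt (1-c) ≤ a ^ m := by
    have h : ∫ c in (0:ℝ)..a, c ^ m * Real.sqrt (1-c) ≤ ∫ _ in (0:ℝ)..a, a ^ m := by
      apply intervalIntegral.integral_mono_on ha hB1 intervalIntegrable_const
      intro x hx
      calc x ^ m * Real.sqrt (1-x) ≤ x ^ m * 1 := by
            apply mul_le_mul_of_nonneg_left _ (pow_nonneg hx.1 m)
            exact Real.sqrt_le_one.mpr (by linarith [hx.1])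
        _ = x ^ m := mul_one _
        _ ≤ a ^ m := pow_le_pow_left₀ hx.1 hx.2 m
    rw [intervalIntegral.integral_const, sub_zero, smul_eq_mul] at h
    calc ∫ c in (0:ℝ)..a, c ^ m * Real.sqrt (1-c) ≤ a * a ^ m := h
      _ ≤ 1 * a ^ m := mul_le_mul_of_nonneg_right ha1 (pow_nonneg ha m)
      _ = a ^ m := one_mul _
  have key4 : B32 m - a ^ m ≤ ∫ c in a..(1:ℝ), c ^ m * Real.sqrt (1-c) := by
    rw [hsplitB]; linarith
  calc gfun a * (B32 m - a ^ m) ≤ gfun a * ∫ c in a..(1:ℝ), c ^ m * Real.sqrt (1-c) :=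
        mul_le_mul_of_nonneg_left key4 (gfun_pos a).le
    _ ≤ ∫ c in a..(1:ℝ), c ^ m * Real.sqrt (1-c) * gfun c := key2
    _ ≤ Jm m := by rw [hsplitJ]; linarith

lemma tendsto_Jm_div : Tendsto (fun n : ℕ => Jm n / B32 n) atTop (nhds (Real.exp (3/4))) := by
  have hL : (0:ℝ) < Real.exp (3/4) := Real.exp_pos _
  rw [Metric.tendsto_atTop]
  intro ε hε
  -- choose a < 1 with gfun a close to exp (3/4)
  have hg1 : gfun 1 = Real.exp (3/4) := by norm_num [gfun]
  have hev : ∀ᶠ c in nhds (1:ℝ), Real.exp (3/4) - ε/2 < gfun c := by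
    have : Tendsto gfun (nhds 1) (nhds (gfun 1)) := gfun_cont.continuousAt
    refine this.eventually (eventually_gt_nhds ?_)
    rw [hg1]; linarith
  rw [Metric.eventually_nhds_iff] at hev
  obtain ⟨δ, hδ, hball⟩ := hev
  set a : ℝ := max 0 (1 - δ/2) with ha_def
  have ha0 : 0 ≤ a := le_max_left _ _
  have ha1 : a < 1 := by
    apply max_lt (by norm_num)
    linarith
  have hadist : dist a 1 < δ := by
    rw [Real.dist_eq, abs_of_nonpos (by linarith)]
    rcases le_or_gt 0 (1 - δ/2) with h | h
    · rw [ha_def, max_eq_right h]; linarith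
    · rw [ha_def, max_eq_left h.le]; linarith
  have hga : Real.exp (3/4) - ε/2 < gfun a := hball hadist
  have hgaL : gfun a ≤ Real.exp (3/4) := by
    rw [← hg1]; exact gfun_mono ha0 ha1.le
  -- the error ratio tends to zero
  have hr0 : Tendsto (fun n : ℕ => ((n:ℝ)+1)^2 * a^n) atTop (nhds 0) := by
    have habs : |a| < 1 := by rw [abs_of_nonneg ha0]; exact ha1
    have t0 := tendsto_pow_const_mul_const_pow_of_abs_lt_one 0 habs
    have t1 := tendsto_pow_const_mul_const_pow_of_abs_lt_one 1 habs
    have t2 := tendsto_pow_const_mul_const_pow_of_abs_lt_one 2 habs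
    have := (t2.add (t1.const_mul 2)).add t0
    norm_num at this
    refine this.congr fun n => ?_
    ring
  have hrb : Tendsto (fun n : ℕ => ((n:ℝ)+1)^((3:ℝ)/2) * a^n) atTop (nhds 0) := by
    apply squeeze_zero (fun n => by positivity) (g := fun n : ℕ => ((n:ℝ)+1)^2 * a^n) _ hr0
    intro n
    apply mul_le_mul_of_nonneg_right _ (pow_nonneg ha0 n)
    calc ((n:ℝ)+1)^((3:ℝ)/2) ≤ ((n:ℝ)+1)^((2:ℝ)) := by
          apply Real.rpow_le_rpow_of_exponent_le (by push_cast; linarith [Nat.cast_nonneg (α := ℝ) n])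
          norm_num
      _ = ((n:ℝ)+1)^(2:ℕ) := by rw [← Real.rpow_natCast]; norm_num
  have hπ2 : Real.sqrt π / 2 ≠ 0 := by positivity
  have hr : Tendsto (fun n : ℕ => a ^ n / B32 n) atTop (nhds 0) := by
    have := hrb.div tendsto_B32 hπ2
    rw [zero_div] at this
    refine this.congr fun n => ?_
    have h1 : ((n:ℝ)+1)^((3:ℝ)/2) ≠ 0 := by positivity
    simp only [Pi.div_apply]
    rw [mul_div_mul_left _ _ h1]
  -- eventual estimate
  have hε' : (0:ℝ) < ε/(2 * Real.exp (3/4)) := by positivity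
  rw [Metric.tendsto_atTop] at hr
  obtain ⟨N, hN⟩ := hr _ hε'
  refine ⟨N, fun n hn => ?_⟩
  have hrn := hN n hn
  have hBpos := b32_pos n
  rw [Real.dist_eq, sub_zero,
    abs_of_nonneg (div_nonneg (pow_nonneg ha0 n) hBpos.le)] at hrn
  -- upper bound
  have hub : Jm n / B32 n ≤ Real.exp (3/4) :=
    (div_le_iff₀ hBpos).mpr (Jm_upper n)
  -- lower bound
  have hlb : gfun a * (1 - a ^ n / B32 n) ≤ Jm n / B32 n := by
    have heq : gfun a * (1 - a ^ n / B32 n) = gfun a * (B32 n - a ^ n) / B32 n := by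
      field_simp
    rw [heq]
    exact div_le_div_of_nonneg_right (Jm_lower n ha0 ha1.le) hBpos.le
  rw [Real.dist_eq, abs_lt]
  constructor
  · -- need exp(3/4) - ε < Jm n / B32 n
    have hga0 : 0 ≤ gfun a := (gfun_pos a).le
    have hprod : gfun a * (a ^ n / B32 n) ≤ Real.exp (3/4) * (a ^ n / B32 n) :=
      mul_le_mul_of_nonneg_right hgaL (div_nonneg (pow_nonneg ha0 n) hBpos.le)
    have hprod2 : Real.exp (3/4) * (a ^ n / B32 n) < ε / 2 := by
      have := mul_lt_mul_of_pos_left hrn hL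
      calc Real.exp (3/4) * (a ^ n / B32 n) < Real.exp (3/4) * (ε/(2 * Real.exp (3/4))) := this
        _ = ε / 2 := by field_simp
    nlinarith [hlb, hga, hprod, hprod2]
  · linarith

lemma qLen_eq (k : ℕ) : qLen k = (1/2) * Jm (k-1) := rfl

lemma part1 : Tendsto (fun k : ℕ =>
      qLen k / (Real.exp (3 / 4) * Real.sqrt π / 4 * (k : ℝ) ^ (-(3 / 2) : ℝ)))
    atTop (nhds 1) := by
  set A : ℝ := Real.exp (3/4) * Real.sqrt π / 4 with hA_def
  have hA : 0 < A := by positivity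
  have t1 : Tendsto (fun k : ℕ => Jm (k-1) / B32 (k-1)) atTop (nhds (Real.exp (3/4))) :=
    tendsto_Jm_div.comp (tendsto_sub_atTop_nat 1)
  have t2 : Tendsto (fun k : ℕ => (k:ℝ)^((3:ℝ)/2) * B32 (k-1)) atTop
      (nhds (Real.sqrt π / 2)) := by
    have base := tendsto_B32.comp (tendsto_sub_atTop_nat 1)
    refine base.congr' ?_
    filter_upwards [eventually_ge_atTop 1] with k hk
    have : ((k-1:ℕ):ℝ) + 1 = (k:ℝ) := by
      rw [Nat.cast_sub hk]; push_cast; ring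
    simp only [Function.comp]
    rw [this]
  have main : Tendsto (fun k : ℕ => qLen k * (k:ℝ)^((3:ℝ)/2)) atTop (nhds A) := by
    have h := ((t1.mul t2).const_mul (1/2 : ℝ))
    have hval : (1/2 : ℝ) * (Real.exp (3/4) * (Real.sqrt π / 2)) = A := by
      rw [hA_def]; ring
    rw [hval] at h
    refine h.congr' ?_
    filter_upwards [eventually_ge_atTop 1] with k _
    have hB := b32_pos (k-1)
    rw [qLen_eq]
    field_simp
  have final := main.div_const A
  rw [div_self hA.ne'] at final
  refine final.congr' ?_
  filter_upwards [eventually_ge_atTop 1] with k hk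
  have hk0 : (0:ℝ) < (k:ℝ) := by exact_mod_cast hk
  have hpow : (k:ℝ) ^ (-(3/2) : ℝ) = ((k:ℝ)^((3:ℝ)/2))⁻¹ := by
    rw [← Real.rpow_neg hk0.le]
  have hx : (0:ℝ) < (k:ℝ)^((3:ℝ)/2) := Real.rpow_pos_of_pos hk0 _
  rw [hpow]
  field_simp

lemma deriv_F {c : ℝ} (hc : c ∈ Set.Ioo (0:ℝ) 1) :
    HasDerivAt (fun x : ℝ => -2 * (Real.sqrt (1-x) * gfun x))
      (c^2 * gfun c / Real.sqrt (1-c)) c := by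
  have h1c : (0:ℝ) < 1 - c := by linarith [hc.2]
  have hsne : Real.sqrt (1-c) ≠ 0 := by positivity
  have hsq : HasDerivAt (fun x : ℝ => Real.sqrt (1-x)) (1/(2*Real.sqrt (1-c)) * (-1)) c := by
    have hin : HasDerivAt (fun x : ℝ => 1 - x) (-1) c := by
      simpa using (hasDerivAt_id c).const_sub 1
    exact (Real.hasDerivAt_sqrt h1c.ne').comp c hin
  have hg : HasDerivAt gfun (gfun c * (1/2 + c/2)) c := by
    have hpoly : HasDerivAt (fun x : ℝ => x/2 + x^2/4) (1/2 + c/2) c := by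
      have h1 : HasDerivAt (fun x : ℝ => x/2) (1/2) c := (hasDerivAt_id c).div_const 2
      have h2 : HasDerivAt (fun x : ℝ => x^2/4) (c/2) c := by
        have := (hasDerivAt_pow 2 c).div_const 4
        refine this.congr_deriv ?_
        push_cast; ring
      exact h1.add h2
    have h3 := hpoly.exp
    show HasDerivAt (fun x : ℝ => Real.exp (x/2 + x^2/4)) _ c
    simpa [gfun, mul_comm] using h3
  have := ((hsq.mul hg).const_mul (-2 : ℝ))
  refine this.congr_deriv ?_
  have hsqsq : Real.sqrt (1-c) ^ 2 = 1 - c := Real.sq_sqrt h1c.le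
  field_simp
  linear_combination (-(gfun c*(1+c))) * hsqsq

lemma intS : IntervalIntegrable (fun c : ℝ => c^2 * gfun c / Real.sqrt (1-c))
    MeasureTheory.volume 0 1 := by
  have hbase : IntervalIntegrable (fun x : ℝ => (1-x)^(-(1/2) : ℝ)) MeasureTheory.volume 0 1 := by
    have h := (intervalIntegrable_rpow' (a := 0) (b := 1) (r := (-(1/2) : ℝ)) (by norm_num)).comp_sub_left 1
    norm_num at h
    exact h.symm
  refine (hbase.const_mul (Real.exp (3/4))).mono_fun ?_ ?_
  · apply Measurable.aestronglyMeasurable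
    apply Measurable.div
    · exact ((measurable_id.pow_const 2).mul (gfun_cont.measurable))
    · exact continuous_const.sub continuous_id |>.measurable.sqrt
  · rw [Filter.EventuallyLE, ae_restrict_iff' measurableSet_uIoc]
    refine MeasureTheory.ae_of_all _ fun x hx => ?_
    rw [Set.uIoc_of_le (by norm_num : (0:ℝ) ≤ 1)] at hx
    have hx0 : 0 < x := hx.1
    have hx1 : x ≤ 1 := hx.2
    have h1x : 0 ≤ 1 - x := by linarith
    have hrw : (1-x)^(-(1/2) : ℝ) = (Real.sqrt (1-x))⁻¹ := by
      rw [Real.rpow_neg h1x, Real.sqrt_eq_rpow]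
    have hnn : 0 ≤ x^2 * gfun x / Real.sqrt (1-x) :=
      div_nonneg (mul_nonneg (sq_nonneg x) (gfun_pos x).le) (Real.sqrt_nonneg _)
    rw [Real.norm_eq_abs, Real.norm_eq_abs, abs_of_nonneg hnn, abs_of_nonneg (by
      rw [hrw]; positivity)]
    rw [hrw, div_eq_mul_inv]
    apply mul_le_mul_of_nonneg_right _ (by positivity)
    have hgx : gfun x ≤ Real.exp (3/4) := by
      calc gfun x ≤ gfun 1 := gfun_mono hx0.le hx1
        _ = Real.exp (3/4) := by norm_num [gfun]
    have hx2 : x^2 ≤ 1 := by nlinarith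
    calc x^2 * gfun x ≤ 1 * gfun x := mul_le_mul_of_nonneg_right hx2 (gfun_pos x).le
      _ = gfun x := one_mul _
      _ ≤ Real.exp (3/4) := hgx

lemma ftc_S : ∫ c in (0:ℝ)..1, c^2 * gfun c / Real.sqrt (1-c) = 2 := by
  have hcont : ContinuousOn (fun x : ℝ => -2 * (Real.sqrt (1-x) * gfun x)) (Set.Icc 0 1) := by
    apply Continuous.continuousOn
    exact (continuous_const.mul ((continuous_const.sub continuous_id).sqrt.mul gfun_cont))
  have h := intervalIntegral.integral_eq_sub_of_hasDeriv_right_of_le (by norm_num) hcont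
    (fun x hx => (deriv_F hx).hasDerivWithinAt) intS
  rw [h]
  norm_num [gfun]

lemma part2 : ∑' k : ℕ, qLen (k + 3) = 1 := by
  classical
  set μ := MeasureTheory.volume.restrict (Set.Ioc (0:ℝ) 1) with hμ
  set u : ℕ → ℝ → ℝ := fun k c => c^(k+2) * Real.sqrt (1-c) * gfun c with hu
  set S : ℝ → ℝ := fun c => c^2 * gfun c / Real.sqrt (1-c) with hS
  have hq : ∀ k : ℕ, qLen (k+3) = (1/2) * ∫ x, u k x ∂μ := by
    intro k
    rw [qLen_eq]
    congr 1
    show Jm (k+2) = _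
    rw [Jm, intervalIntegral.integral_of_le (by norm_num : (0:ℝ) ≤ 1)]
  have hcontu : ∀ k : ℕ, Continuous (u k) := by
    intro k
    exact ((continuous_pow _).mul
      ((continuous_const.sub continuous_id).sqrt)).mul gfun_cont
  have hmeas : ∀ k : ℕ, MeasureTheory.AEStronglyMeasurable (u k) μ :=
    fun k => (hcontu k).aestronglyMeasurable
  have hnn : ∀ k : ℕ, 0 ≤ᵐ[μ] u k := by
    intro k
    filter_upwards [MeasureTheory.ae_restrict_mem measurableSet_Ioc] with x hx
    exact mul_nonneg (mul_nonneg (pow_nonneg hx.1.le _) (Real.sqrt_nonneg _)) (gfun_pos x).le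
  have h1 : ∀ k : ℕ, ∫ x, u k x ∂μ = (∫⁻ x, ENNReal.ofReal (u k x) ∂μ).toReal :=
    fun k => MeasureTheory.integral_eq_lintegral_of_nonneg_ae (hnn k) (hmeas k)
  set L : ℕ → ENNReal := fun k => ∫⁻ x, ENNReal.ofReal (u k x) ∂μ with hL
  -- swap sum and lintegral
  have h2 : ∑' k, L k = ∫⁻ x, ∑' k, ENNReal.ofReal (u k x) ∂μ :=
    (MeasureTheory.lintegral_tsum fun k =>
      ((hcontu k).measurable.ennreal_ofReal).aemeasurable).symm
  -- pointwise identity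
  have h3 : ∀ᵐ x ∂μ, ∑' k, ENNReal.ofReal (u k x) = ENNReal.ofReal (S x) := by
    filter_upwards [MeasureTheory.ae_restrict_mem measurableSet_Ioc] with x hx
    rcases eq_or_lt_of_le hx.2 with h1x | h1x
    · have hzero : ∀ k : ℕ, u k x = 0 := by
        intro k
        rw [hu]
        simp [← h1x]
      have hSzero : S x = 0 := by
        rw [hS, ← h1x]
        simp
      simp [hzero, hSzero]
    · have hx0 : 0 < x := hx.1
      have h1mx : 0 < 1 - x := by linarith
      have hsne : Real.sqrt (1-x) ≠ 0 := by positivity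
      have hsummable : Summable (fun k : ℕ => u k x) := by
        have hgeo : Summable (fun k : ℕ => x ^ k) :=
          summable_geometric_of_lt_one hx0.le h1x
        have := (hgeo.mul_left (x^2 * Real.sqrt (1-x) * gfun x))
        refine this.congr fun k => ?_
        simp only [hu]; ring
      rw [← ENNReal.ofReal_tsum_of_nonneg (fun k =>
        mul_nonneg (mul_nonneg (pow_nonneg hx0.le _) (Real.sqrt_nonneg _)) (gfun_pos x).le)
        hsummable]
      congr 1
      have htsum : ∑' k : ℕ, u k x = (x^2 * Real.sqrt (1-x) * gfun x) * (1-x)⁻¹ := by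
        have hgeo : ∑' k : ℕ, x ^ k = (1-x)⁻¹ :=
          tsum_geometric_of_lt_one hx0.le h1x
        rw [← hgeo, ← tsum_mul_left]
        congr 1
        funext k
        simp only [hu]; ring
      rw [htsum, hS]
      have hsq : Real.sqrt (1-x) ^ 2 = 1 - x := Real.sq_sqrt h1mx.le
      field_simp
      linear_combination (gfun x) * hsq
  -- total value
  have hIntS : MeasureTheory.Integrable S μ := intS.1
  have hnnS : 0 ≤ᵐ[μ] S := by
    filter_upwards [MeasureTheory.ae_restrict_mem measurableSet_Ioc] with x hx
    exact div_nonneg (mul_nonneg (sq_nonneg x) (gfun_pos x).le) (Real.sqrt_nonneg _)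
  have h4 : ∫⁻ x, ENNReal.ofReal (S x) ∂μ = ENNReal.ofReal 2 := by
    rw [← MeasureTheory.ofReal_integral_eq_lintegral_ofReal hIntS hnnS]
    congr 1
    rw [← intervalIntegral.integral_of_le (by norm_num : (0:ℝ) ≤ 1)]
    exact ftc_S
  have htot : ∑' k, L k = ENNReal.ofReal 2 := by
    rw [h2, MeasureTheory.lintegral_congr_ae h3, h4]
  have hfin : ∀ k, L k ≠ ⊤ := by
    intro k
    refine ne_top_of_le_ne_top ?_ (ENNReal.le_tsum k)
    rw [htot]
    exact ENNReal.ofReal_ne_top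
  calc ∑' k : ℕ, qLen (k+3) = ∑' k : ℕ, (1/2 : ℝ) * (L k).toReal := by
        refine tsum_congr fun k => ?_
        rw [hq k, h1 k]
    _ = (1/2 : ℝ) * ∑' k : ℕ, (L k).toReal := tsum_mul_left
    _ = (1/2 : ℝ) * (∑' k, L k).toReal := by rw [ENNReal.tsum_toReal_eq hfin]
    _ = 1 := by rw [htot, ENNReal.toReal_ofReal (by norm_num)]; norm_num


/-- `q_k = (1+o(1))·(e^{3/4}√π/4)·k^{−3/2}` as `k → ∞`, and `Σ_{k≥3} q_k = 1`. -/
theorem qLen_asymp_and_sum :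
    Tendsto (fun k : ℕ =>
        qLen k / (Real.exp (3 / 4) * Real.sqrt π / 4 * (k : ℝ) ^ (-(3 / 2) : ℝ)))
      atTop (nhds 1) ∧
    ∑' k : ℕ, qLen (k + 3) = 1 :=
  ⟨part1, part2⟩
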